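/- Let G be a finite group and B = {b₁,…,bₙ} ⊆ G. Define the class function θ_B by θ_B(C) = |{(j,m) : bⱼ⁻¹bₘ ∈ C}| for each conjugacy class C, and let γ(g) be the size of the conjugacy class of g. Then for every irreducible character χ of G, the inner product ⟨χ, θ_B/γ⟩ = (1/|G|) ∑_{g∈G} χ̄(g) θ_B(g)/γ(g) is a nonnegative real number. -/

import Mathlib

open scoped ComplexOrder Classical

open Matrix Finset

/-- Characters are constant on conjugacy classes. -/
lemma char_isConj_aux {G : Type} [Group G] (V : FDRep ℂ G) {g d : G} (h : IsConj g d) :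
    V.character g = V.character d := by
  obtain ⟨c, hc⟩ := isConj_iff.mp h
  rw [← hc]
  exact (FDRep.char_conj V g c).symm

open scoped MatrixOrder in
/-- The key positivity fact: for any f.d. complex representation of a finite group,
the sum `∑_{(j,m) ∈ B × B} conj χ(b_j⁻¹ b_m)` is nonnegative. -/
lemma key_nonneg {G : Type} [Group G] [Fintype G] (B : Finset G) (V : FDRep ℂ G) :
    0 ≤ ∑ p ∈ B ×ˢ B, star (V.character (p.1⁻¹ * p.2)) := by
  classical
  set n := Module.finrank ℂ V with hn
  let b : Module.Basis (Fin n) ℂ V := Module.finBasis ℂ V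
  set M : G → Matrix (Fin n) (Fin n) ℂ := fun g => LinearMap.toMatrix b b (V.ρ g) with hMdef
  have Mmul : ∀ g h : G, M (g * h) = M g * M h := by
    intro g h
    simp only [hMdef, _root_.map_mul]
    exact LinearMap.toMatrix_mul b _ _
  have M1 : M 1 = 1 := by
    simp only [hMdef, _root_.map_one]
    exact LinearMap.toMatrix_one b
  have hchar : ∀ g : G, V.character g = (M g).trace := fun g =>
    LinearMap.trace_eq_matrix_trace ℂ b (V.ρ g)
  -- the averaged Gram matrix
  set Q : Matrix (Fin n) (Fin n) ℂ := ∑ g : G, (M g)ᴴ * M g with hQdef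
  have hQH : Q.IsHermitian := by
    show Qᴴ = Q
    rw [hQdef, Matrix.conjTranspose_sum]
    exact Finset.sum_congr rfl fun g _ => (Matrix.posSemidef_conjTranspose_mul_self (M g)).1
  have expand : ∀ x : Fin n → ℂ,
      star x ⬝ᵥ Q *ᵥ x = ∑ g : G, star x ⬝ᵥ ((M g)ᴴ * M g) *ᵥ x := by
    intro x
    have h1 : Q *ᵥ x = ∑ g : G, ((M g)ᴴ * M g) *ᵥ x := by
      rw [hQdef]
      exact map_sum (Matrix.mulVec.addMonoidHomLeft x) _ _
    rw [h1]
    simp only [dotProduct, Finset.sum_apply, Finset.mul_sum]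
    exact Finset.sum_comm
  have hQ : Q.PosDef := by
    refine Matrix.posDef_iff_dotProduct_mulVec.mpr ⟨hQH, fun x hx => ?_⟩
    rw [expand x]
    refine Finset.sum_pos' (fun g _ => (Matrix.posSemidef_conjTranspose_mul_self (M g)).dotProduct_mulVec_nonneg x) ?_
    refine ⟨1, Finset.mem_univ 1, ?_⟩
    rw [M1]
    simpa only [Matrix.conjTranspose_one, Matrix.one_mul, Matrix.one_mulVec] using
      Matrix.dotProduct_star_self_pos_iff.mpr hx
  have Qinv : ∀ h : G, (M h)ᴴ * Q * M h = Q := by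
    intro h
    calc (M h)ᴴ * Q * M h = ∑ g : G, (M h)ᴴ * ((M g)ᴴ * M g) * M h := by
          rw [hQdef, Finset.mul_sum, Finset.sum_mul]
      _ = ∑ g : G, (M (g * h))ᴴ * M (g * h) := by
          refine Finset.sum_congr rfl fun g _ => ?_
          rw [Mmul, Matrix.conjTranspose_mul]
          simp only [Matrix.mul_assoc]
      _ = Q := by
          rw [hQdef]
          exact Fintype.sum_equiv (Equiv.mulRight h) _ _ (fun g => rfl)
  -- square root of Q
  set R : Matrix (Fin n) (Fin n) ℂ := CFC.sqrt Q with hRdef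
  have hRH : Rᴴ = R := (Matrix.nonneg_iff_posSemidef.mp (CFC.sqrt_nonneg Q)).1
  have hRR : R * R = Q := CFC.sqrt_mul_sqrt_self Q hQ.posSemidef.nonneg
  have hRdet : IsUnit R.det := by
    rw [isUnit_iff_ne_zero]
    intro h0
    have : Q.det = 0 := by rw [← hRR, Matrix.det_mul, h0, mul_zero]
    exact hQ.det_pos.ne' this
  have hRRinv : R * R⁻¹ = 1 := Matrix.mul_nonsing_inv R hRdet
  have hRinvR : R⁻¹ * R = 1 := Matrix.nonsing_inv_mul R hRdet
  -- the unitary model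
  set N : G → Matrix (Fin n) (Fin n) ℂ := fun g => R * M g * R⁻¹ with hNdef
  have Nmul : ∀ g h : G, N g * N h = N (g * h) := by
    intro g h
    rw [hNdef]
    dsimp only
    rw [Mmul]
    calc R * M g * R⁻¹ * (R * M h * R⁻¹)
        = R * (M g * ((R⁻¹ * R) * (M h * R⁻¹))) := by simp only [Matrix.mul_assoc]
      _ = R * (M g * M h) * R⁻¹ := by rw [hRinvR, Matrix.one_mul]; simp only [Matrix.mul_assoc]
  have N1 : N 1 = 1 := by
    rw [hNdef]; dsimp only; rw [M1, Matrix.mul_one, hRRinv]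
  have NH : ∀ g : G, (N g)ᴴ = R⁻¹ * ((M g)ᴴ * R) := by
    intro g
    rw [hNdef]
    dsimp only
    rw [Matrix.conjTranspose_mul, Matrix.conjTranspose_mul, Matrix.conjTranspose_nonsing_inv,
      hRH]
  have Nunit : ∀ g : G, (N g)ᴴ * N g = 1 := by
    intro g
    rw [NH g]
    calc R⁻¹ * ((M g)ᴴ * R) * (R * M g * R⁻¹)
        = R⁻¹ * ((M g)ᴴ * (R * R) * M g) * R⁻¹ := by simp only [Matrix.mul_assoc]
      _ = R⁻¹ * Q * R⁻¹ := by rw [hRR, Qinv g]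
      _ = 1 := by
          rw [← hRR, ← Matrix.mul_assoc, hRinvR, Matrix.one_mul, hRRinv]
  have Nstar : ∀ g : G, (N g)ᴴ = N g⁻¹ := by
    intro g
    have h2 : N g * N g⁻¹ = 1 := by rw [Nmul, mul_inv_cancel, N1]
    calc (N g)ᴴ = (N g)ᴴ * (N g * N g⁻¹) := by rw [h2, Matrix.mul_one]
      _ = ((N g)ᴴ * N g) * N g⁻¹ := (Matrix.mul_assoc _ _ _).symm
      _ = N g⁻¹ := by rw [Nunit g, Matrix.one_mul]
  have traceN : ∀ g : G, (N g).trace = (M g).trace := by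
    intro g
    rw [hNdef]
    dsimp only
    rw [Matrix.trace_mul_cycle, hRinvR, Matrix.one_mul]
  -- rewrite each summand
  have hterm : ∀ p : G × G,
      star (V.character (p.1⁻¹ * p.2)) = ((N p.2)ᴴ * N p.1).trace := by
    intro p
    rw [hchar, ← traceN, ← Matrix.trace_conjTranspose, Nstar, _root_.mul_inv_rev, inv_inv,
      ← Nmul, ← Nstar]
  calc (0 : ℂ) ≤ ((∑ j ∈ B, N j)ᴴ * (∑ j ∈ B, N j)).trace := by
        rw [Matrix.trace]
        refine Finset.sum_nonneg fun i _ => ?_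
        rw [Matrix.diag_apply, Matrix.mul_apply]
        refine Finset.sum_nonneg fun j _ => ?_
        rw [Matrix.conjTranspose_apply]
        exact star_mul_self_nonneg _
    _ = ∑ p ∈ B ×ˢ B, star (V.character (p.1⁻¹ * p.2)) := by
        rw [Matrix.conjTranspose_sum, Matrix.sum_mul, Matrix.trace_sum]
        calc ∑ m ∈ B, ((N m)ᴴ * ∑ j ∈ B, N j).trace
            = ∑ m ∈ B, ∑ j ∈ B, ((N m)ᴴ * N j).trace := by
              refine Finset.sum_congr rfl fun m _ => ?_
              rw [Finset.mul_sum, Matrix.trace_sum]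
          _ = ∑ j ∈ B, ∑ m ∈ B, ((N m)ᴴ * N j).trace := Finset.sum_comm
          _ = ∑ p ∈ B ×ˢ B, star (V.character (p.1⁻¹ * p.2)) := by
              rw [Finset.sum_product]
              exact Finset.sum_congr rfl fun x _ => Finset.sum_congr rfl fun y _ =>
                (hterm (x, y)).symm

/-- For a finite group `G`, a finite subset `B`, the difference-counting class function
`θ_B` (counting ordered pairs of `B` whose difference is conjugate to `g`) and `γ g` the
size of the conjugacy class of `g`, the inner product
`⟨χ, θ_B/γ⟩ = (1/|G|) ∑ g, conj (χ g) * θ_B g / γ g` with any irreducible character `χ`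
is a nonnegative real number. -/
theorem stmt2 {G : Type} [Group G] [Fintype G] (B : Finset G)
    (θ γ : G → ℕ)
    (hθ : ∀ g, θ g = ((B ×ˢ B).filter (fun p => IsConj g (p.1⁻¹ * p.2))).card)
    (hγ : ∀ g, γ g = (Finset.univ.filter (fun x => IsConj g x)).card)
    (V : FDRep ℂ G) (hV : CategoryTheory.Simple V) :
    0 ≤ (1 / (Fintype.card G : ℂ)) *
        ∑ g : G, star (V.character g) * ((θ g : ℂ) / (γ g : ℂ)) := by
  classical
  have hθ' : ∀ g : G, (θ g : ℂ)
      = ∑ p ∈ B ×ˢ B, if IsConj g (p.1⁻¹ * p.2) then (1 : ℂ) else 0 := by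
    intro g
    rw [hθ g, Finset.card_filter]
    push_cast
    rfl
  have hsum : ∑ g : G, star (V.character g) * ((θ g : ℂ) / (γ g : ℂ))
      = ∑ p ∈ B ×ˢ B, star (V.character (p.1⁻¹ * p.2)) := by
    calc ∑ g : G, star (V.character g) * ((θ g : ℂ) / (γ g : ℂ))
        = ∑ g : G, ∑ p ∈ B ×ˢ B,
            (if IsConj g (p.1⁻¹ * p.2) then star (V.character g) / (γ g : ℂ) else 0) := by
          refine Finset.sum_congr rfl fun g _ => ?_
          rw [hθ' g, Finset.sum_div, Finset.mul_sum]
          refine Finset.sum_congr rfl fun p _ => ?_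
          split_ifs <;> simp [div_eq_mul_inv, mul_comm]
      _ = ∑ p ∈ B ×ˢ B, ∑ g : G,
            (if IsConj g (p.1⁻¹ * p.2) then star (V.character g) / (γ g : ℂ) else 0) :=
          Finset.sum_comm
      _ = ∑ p ∈ B ×ˢ B, star (V.character (p.1⁻¹ * p.2)) := by
          refine Finset.sum_congr rfl fun p _ => ?_
          set d := p.1⁻¹ * p.2 with hd
          rw [← Finset.sum_filter]
          have hfe : ∀ g ∈ Finset.univ.filter (fun g => IsConj g d),
              star (V.character g) / (γ g : ℂ) = star (V.character d) / (γ d : ℂ) := by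
            intro g hg
            rw [Finset.mem_filter] at hg
            have hconj : IsConj g d := hg.2
            have h1 : V.character g = V.character d := char_isConj_aux V hconj
            have h2 : γ g = γ d := by
              rw [hγ, hγ]
              congr 1
              ext x
              simp only [Finset.mem_filter, Finset.mem_univ, true_and]
              exact ⟨fun h => hconj.symm.trans h, fun h => hconj.trans h⟩
            rw [h1, h2]
          rw [Finset.sum_congr rfl hfe, Finset.sum_const]
          have hcard : (Finset.univ.filter (fun g => IsConj g d)).card = γ d := by
            rw [hγ]
            congr 1
            ext x
            simp only [Finset.mem_filter, Finset.mem_univ, true_and]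
            exact isConj_comm
          rw [hcard]
          have hγd : (γ d : ℂ) ≠ 0 := by
            rw [hγ]
            have : d ∈ Finset.univ.filter (fun x => IsConj d x) := by
              simp only [Finset.mem_filter, Finset.mem_univ, true_and]
              exact IsConj.refl d
            have hpos : 0 < (Finset.univ.filter (fun x => IsConj d x)).card :=
              Finset.card_pos.mpr ⟨d, this⟩
            exact_mod_cast Nat.cast_ne_zero.mpr hpos.ne'
          rw [nsmul_eq_mul, mul_comm, div_mul_cancel₀ _ hγd]
  rw [hsum]
  refine mul_nonneg ?_ (key_nonneg B V)
  have : ((Fintype.card G : ℂ)) = ((Fintype.card G : ℝ) : ℂ) := by norm_cast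
  rw [this, ← Complex.ofReal_one, ← Complex.ofReal_div]
  rw [Complex.zero_le_real]
  positivity
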